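/- For every vector a in R^3, the sum over all eight sign choices (s_x, s_y, s_z) in {+1,-1}^3 of Θ(v_{s_x s_y s_z} · a) is at most 4·|a|, where Θ(x) = max(x, 0). -/

import Mathlib

open RealInnerProductSpace

/-- The vertex `(s_x, s_y, s_z)` of the cube `[-1,1]^3`, signs encoded by booleans. -/
noncomputable def cubeVtx (s : Fin 3 → Bool) : EuclideanSpace ℝ (Fin 3) :=
  WithLp.toLp 2 fun k => if s k then 1 else -1

lemma key_abs_sum_le (x y z : ℝ) :
    |x+y+z| + |x+y-z| + |x-y+z| + |x-y-z| ≤ 4 * Real.sqrt (x^2+y^2+z^2) := by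
  have h16 : (4:ℝ) * Real.sqrt (x^2+y^2+z^2) = Real.sqrt (16*(x^2+y^2+z^2)) := by
    rw [show (16:ℝ)*(x^2+y^2+z^2) = 4^2*(x^2+y^2+z^2) by ring, Real.sqrt_mul (by positivity),
      Real.sqrt_sq (by norm_num)]
  rw [h16]; apply Real.le_sqrt_of_sq_le
  have h1 := abs_nonneg (x+y+z); have h2 := abs_nonneg (x+y-z)
  have h3 := abs_nonneg (x-y+z); have h4 := abs_nonneg (x-y-z)
  have s1 := sq_abs (x+y+z); have s2 := sq_abs (x+y-z)
  have s3 := sq_abs (x-y+z); have s4 := sq_abs (x-y-z)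
  nlinarith [sq_nonneg (|x+y+z| - |x+y-z|), sq_nonneg (|x+y+z| - |x-y+z|),
    sq_nonneg (|x+y+z| - |x-y-z|), sq_nonneg (|x+y-z| - |x-y+z|),
    sq_nonneg (|x+y-z| - |x-y-z|), sq_nonneg (|x-y+z| - |x-y-z|)]

theorem sum_posPart_inner_cubeVtx_le (a : EuclideanSpace ℝ (Fin 3)) :
    ∑ s : Fin 3 → Bool, max ⟪cubeVtx s, a⟫ 0 ≤ 4 * ‖a‖ := by
  have huniv : (Finset.univ : Finset (Fin 3 → Bool)) =
      {![false,false,false], ![false,false,true], ![false,true,false], ![false,true,true],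
       ![true,false,false], ![true,false,true], ![true,true,false], ![true,true,true]} := by
    decide
  have hinner : ∀ s : Fin 3 → Bool, ⟪cubeVtx s, a⟫ =
      (if s 0 then 1 else -1) * a 0 + (if s 1 then 1 else -1) * a 1 +
      (if s 2 then 1 else -1) * a 2 := by
    intro s
    simp [cubeVtx, PiLp.inner_apply, Fin.sum_univ_three]
  have hnorm : ‖a‖ = Real.sqrt ((a 0)^2 + (a 1)^2 + (a 2)^2) := by
    rw [EuclideanSpace.norm_eq]
    simp [Fin.sum_univ_three, sq_abs]
  rw [huniv]
  rw [Finset.sum_insert (by decide), Finset.sum_insert (by decide),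
    Finset.sum_insert (by decide), Finset.sum_insert (by decide),
    Finset.sum_insert (by decide), Finset.sum_insert (by decide),
    Finset.sum_insert (by decide), Finset.sum_singleton]
  simp only [hinner, hnorm]
  norm_num [Matrix.cons_val_two, Matrix.tail_cons, Matrix.head_cons]
  have := key_abs_sum_le (a 0) (a 1) (a 2)
  have e1 : ∀ t : ℝ, max t 0 + max (-t) 0 = |t| := by
    intro t
    rcases le_total t 0 with h | h
    · rw [max_eq_right h, max_eq_left (by linarith : (0:ℝ) ≤ -t), abs_of_nonpos h, zero_add]
    · rw [max_eq_left h, max_eq_right (by linarith : -t ≤ 0), abs_of_nonneg h, add_zero]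
  have E1 := e1 (a 0 + a 1 + a 2)
  have E2 := e1 (a 0 + a 1 - a 2)
  have E3 := e1 (a 0 - a 1 + a 2)
  have E4 := e1 (a 0 - a 1 - a 2)
  ring_nf at E1 E2 E3 E4 this ⊢
  linarith
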